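/- Let X, Y be real normed spaces, T : X → Y bounded linear, 1 < q ≤ 2 ≤ r, q* the conjugate of q, S(y) := (1/q)‖y‖^q, S*(p) := (1/q*)‖p‖^{q*}. Assume the Xu–Roach inequalities: there is c_S > 0 with S(y₁) − S(y₂) − η(y₁ − y₂) ≥ c_S · max(‖y₂‖, ‖y₁ − y₂‖)^{q−r} ‖y₁ − y₂‖^r for all y₁, y₂ ∈ Y and η ∈ ∂S(y₂), and there is c* > 0 with S*(p₁) − S*(p₂) − (p₁ − p₂)(G) ≥ c* ‖p₁ − p₂‖^{q*} for all p₁, p₂ ∈ Y* and G ∈ Y with G ∈ ∂S*(p₂). Let c > 0. Then there exist constants C, C̃ > 0, depending only on q, r, c, c_S, c*, such that the following holds. Let R : X → ℝ be convex; f† ∈ X; p̄ ∈ Y* with p̄ ∘ T ∈ ∂R(f†); ω̄ ∈ X with T ω̄ ∈ ∂S*(p̄); Φ an index function; β ≥ 0, μ > 1, t̄ > 0; and ξ_t ∈ X* for t ∈ (0, t̄] with ξ_t ∈ ∂R(f† − t ω̄) satisfying the third-order variational source condition: for all f ∈ X, t ∈ (0, t̄]: (ξ_t − p̄ ∘ T)(f†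 − t ω̄ − f) ≤ D_R^{ξ_t}(f, f† − t ω̄) + t² Φ(t^{−q} ‖T f − T f† + t T ω̄‖^q) + β t^{2μ}. Let δ > 0 and α > 0 satisfy δ ≤ c α^{q*−1} and α^{q*−1} ≤ t̄; let g ∈ Y with ‖g − T f†‖ ≤ δ; let f̂ ∈ X minimize h ↦ (1/α)S(Th − g) + R(h); let p̂ ∈ Y* satisfy p̂ ∘ T ∈ ∂R(f̂) and −α p̂ ∈ ∂S(T f̂ − g). Then for every M ∈ ℝ satisfying −C̃ (c + ‖T ω̄‖)^{q−r} α^{−(q*−1)} τ + Φ(τ^{q/r}) ≤ M for all τ ≥ 0, one has (1/(2α)) [ S*(−α p̂) − S*(−α p̄) + α^{q*} (p̄ − p̂)(T ω̄) ] ≤ C δ^q/α + α^{2(q*−1)} M + β α^{2μ(q*−1)}. -/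

import Mathlib

open Real Filter

section aux
variable {E : Type*} [NormedAddCommGroup E] [NormedSpace ℝ E]

lemma subgrad_eval {q : ℝ} (hq : 1 < q) (y : E) (η : E →L[ℝ] ℝ)
    (hη : ∀ h : E, 1/q * ‖y‖ ^ q + η (h - y) ≤ 1/q * ‖h‖ ^ q) :
    η y = ‖y‖ ^ q := by
  have hq0 : (0:ℝ) < q := lt_trans one_pos hq
  set a : ℝ := ‖y‖ ^ q with ha
  set g : ℝ → ℝ := fun s => 1/q * ((1+s) ^ q * a) - 1/q * a - s * η y with hg
  have key : ∀ s : ℝ, -1 ≤ s → 0 ≤ g s := by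
    intro s hs
    have h := hη ((1 + s) • y)
    have h1 : (1 + s) • y - y = s • y := by
      rw [add_smul, one_smul]; abel
    have h2 : ‖(1 + s) • y‖ ^ q = (1+s) ^ q * a := by
      rw [norm_smul, Real.norm_eq_abs, abs_of_nonneg (by linarith : (0:ℝ) ≤ 1 + s),
        Real.mul_rpow (by linarith) (norm_nonneg y)]
    rw [h1] at h
    have h3 : η (s • y) = s * η y := by simp
    rw [h3, h2] at h
    simp only [hg]
    linarith
  have hg0 : g 0 = 0 := by simp [hg]
  have hlocmin : IsLocalMin g 0 := by
    rw [IsLocalMin, IsMinFilter, hg0]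
    refine Filter.eventually_of_mem (Ioi_mem_nhds (show (-1:ℝ) < 0 by norm_num)) ?_
    intro s hs
    exact key s (le_of_lt hs)
  have d1 : HasDerivAt (fun s : ℝ => 1 + s) 1 0 := by
    simpa using (hasDerivAt_id (0:ℝ)).const_add (1:ℝ)
  have d2 : HasDerivAt (fun s : ℝ => (1 + s) ^ q) q 0 := by
    have hd := Real.hasDerivAt_rpow_const (x := ((1:ℝ)+0)) (p := q) (Or.inl (by norm_num))
    have := hd.comp 0 d1
    simp only [add_zero, Real.one_rpow, mul_one] at this
    exact this
  have d3 : HasDerivAt g (a - η y) 0 := by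
    have h4 : HasDerivAt (fun s : ℝ => 1/q * ((1+s) ^ q * a)) (1/q * (q * a)) 0 := by
      exact ((d2.mul_const a).const_mul (1/q))
    have h5 : HasDerivAt (fun s : ℝ => s * η y) (η y) 0 := by
      simpa using (hasDerivAt_id (0:ℝ)).mul_const (η y)
    have := (h4.sub_const (1/q * a)).sub h5
    have he : 1/q * (q * a) - η y = a - η y := by field_simp
    rw [he] at this
    exact this
  have := hlocmin.hasDerivAt_eq_zero d3
  linarith [this]

lemma subgrad_le {q : ℝ} (hq : 1 < q) (y : E) (η : E →L[ℝ] ℝ)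
    (hη : ∀ h : E, 1/q * ‖y‖ ^ q + η (h - y) ≤ 1/q * ‖h‖ ^ q) :
    ∀ z : E, η z ≤ ‖y‖ ^ (q-1) * ‖z‖ := by
  have hq0 : (0:ℝ) < q := lt_trans one_pos hq
  have hq1 : q - 1 ≠ 0 := by linarith
  have he := subgrad_eval hq y η hη
  have hgen : ∀ h : E, η h ≤ 1/q * ‖h‖ ^ q + (1 - 1/q) * ‖y‖ ^ q := by
    intro h
    have h0 := hη h
    rw [map_sub] at h0
    nlinarith [h0, he]
  intro z
  rcases eq_or_lt_of_le (norm_nonneg y) with hy0 | hy0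
  · -- y has norm zero
    have hy0' : ‖y‖ = 0 := hy0.symm
    rw [hy0', Real.zero_rpow hq1, zero_mul]
    have hb : ∀ s : ℝ, 0 < s → η z ≤ s ^ (q-1) * (1/q * ‖z‖ ^ q) := by
      intro s hs
      have h := hgen (s • z)
      rw [hy0', Real.zero_rpow (ne_of_gt hq0)] at h
      have h2 : ‖s • z‖ ^ q = s ^ q * ‖z‖ ^ q := by
        rw [norm_smul, Real.norm_eq_abs, abs_of_pos hs,
          Real.mul_rpow (le_of_lt hs) (norm_nonneg z)]
      rw [map_smul, smul_eq_mul, h2] at h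
      have hsq : s ^ q = s ^ (q-1) * s := by
        rw [show q = (q-1) + 1 by ring, Real.rpow_add_one (ne_of_gt hs)]
        ring_nf
      rw [hsq] at h
      have : η z * s ≤ (s ^ (q-1) * (1/q * ‖z‖ ^ q)) * s := by
        have hrw : (s ^ (q-1) * (1/q * ‖z‖ ^ q)) * s = 1/q * (s ^ (q-1) * s * ‖z‖ ^ q) + (1 - 1/q) * 0 := by ring
        rw [hrw]
        linarith [h]
      exact le_of_mul_le_mul_right this hs
    have ht : Filter.Tendsto (fun s : ℝ => s ^ (q-1) * (1/q * ‖z‖ ^ q))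
        (nhdsWithin 0 (Set.Ioi 0)) (nhds 0) := by
      have h1 : Filter.Tendsto (fun s : ℝ => s ^ (q-1)) (nhds (0:ℝ)) (nhds (0:ℝ)) := by
        have hc := Real.continuousAt_rpow_const 0 (q-1) (Or.inr (by linarith))
        have : (fun s : ℝ => s ^ (q-1)) 0 = 0 := by
          simp [Real.zero_rpow hq1]
        simpa [ContinuousAt, this] using hc
      have h2 : Filter.Tendsto (fun s : ℝ => s ^ (q-1))
          (nhdsWithin (0:ℝ) (Set.Ioi 0)) (nhds (0:ℝ)) :=
        h1.mono_left nhdsWithin_le_nhds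
      have := h2.mul_const (1/q * ‖z‖ ^ q)
      simpa using this
    exact ge_of_tendsto ht
      (Filter.eventually_of_mem self_mem_nhdsWithin (fun s hs => hb s hs))
  · rcases eq_or_lt_of_le (norm_nonneg z) with hz0 | hz0
    · rw [← hz0, mul_zero]
      have : z = 0 := norm_eq_zero.mp hz0.symm
      simp [this]
    · have h5 := hgen ((‖y‖/‖z‖) • z)
      have hn : ‖(‖y‖/‖z‖) • z‖ = ‖y‖ := by
        rw [norm_smul, Real.norm_eq_abs, abs_of_pos (div_pos hy0 hz0),
          div_mul_cancel₀ _ (ne_of_gt hz0)]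
      rw [map_smul, smul_eq_mul, hn] at h5
      have h5' : (‖y‖/‖z‖) * η z ≤ ‖y‖ ^ q := by nlinarith [h5]
      have h7 : ‖y‖ * η z ≤ ‖y‖ ^ q * ‖z‖ := by
        have := mul_le_mul_of_nonneg_right h5' (le_of_lt hz0)
        calc ‖y‖ * η z = ((‖y‖/‖z‖) * η z) * ‖z‖ := by field_simp
          _ ≤ ‖y‖ ^ q * ‖z‖ := this
      have h9 : ‖y‖ ^ (q-1) = ‖y‖ ^ q / ‖y‖ := by
        rw [Real.rpow_sub hy0, Real.rpow_one]
      rw [h9, div_mul_eq_mul_div, le_div_iff₀ hy0]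
      linarith [h7]

lemma subgrad_opNorm {q : ℝ} (hq : 1 < q) (y : E) (η : E →L[ℝ] ℝ)
    (hη : ∀ h : E, 1/q * ‖y‖ ^ q + η (h - y) ≤ 1/q * ‖h‖ ^ q) :
    ‖η‖ = ‖y‖ ^ (q-1) := by
  have hq1 : q - 1 ≠ 0 := by linarith
  have hle : ‖η‖ ≤ ‖y‖ ^ (q-1) := by
    refine ContinuousLinearMap.opNorm_le_bound η (Real.rpow_nonneg (norm_nonneg y) _) ?_
    intro z
    have h1 := subgrad_le hq y η hη z
    have h2 := subgrad_le hq y η hη (-z)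
    rw [map_neg, norm_neg] at h2
    rw [Real.norm_eq_abs]
    exact abs_le.mpr ⟨by linarith, h1⟩
  rcases eq_or_lt_of_le (norm_nonneg y) with h0 | h0
  · rw [← h0, Real.zero_rpow hq1] at hle ⊢
    exact le_antisymm hle (norm_nonneg η)
  · refine le_antisymm hle ?_
    have he := subgrad_eval hq y η hη
    have h3 : ‖y‖ ^ q ≤ ‖η‖ * ‖y‖ := by
      calc ‖y‖ ^ q = η y := he.symm
        _ ≤ |η y| := le_abs_self _
        _ = ‖η y‖ := (Real.norm_eq_abs _).symm
        _ ≤ ‖η‖ * ‖y‖ := η.le_opNorm y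
    have h4 : ‖y‖ ^ (q-1) = ‖y‖ ^ q / ‖y‖ := by
      rw [Real.rpow_sub h0, Real.rpow_one]
    rw [h4, div_le_iff₀ h0]
    exact h3

end aux


set_option maxHeartbeats 1000000 in
/-- Convergence rates for the dual problem (Lemma `dual_conv` of the
paper) under the third order variational source condition `VSC³(f†, Φ, R, S)`:
`(1/(2α))[S*(−αp̂) − S*(−αp̄) + α^{q*}(p̄−p̂)(Tω̄)]
  ≤ C δ^q/α + α^{2(q*−1)} M + β α^{2μ(q*−1)}`. -/
theorem stmt_10 {X Y : Type*} [NormedAddCommGroup X] [NormedSpace ℝ X]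
    [NormedAddCommGroup Y] [NormedSpace ℝ Y]
    (T : X →L[ℝ] Y) (q r qs : ℝ) (hq : 1 < q) (hq2 : q ≤ 2) (hr : 2 ≤ r)
    (hqs : 1 / q + 1 / qs = 1)
    -- Xu–Roach inequality for S = (1/q)‖·‖^q
    (cS : ℝ) (hcS : 0 < cS)
    (hXRS : ∀ (y₁ y₂ : Y) (η : Y →L[ℝ] ℝ),
      (∀ h : Y, 1 / q * ‖y₂‖ ^ q + η (h - y₂) ≤ 1 / q * ‖h‖ ^ q) →
      1 / q * ‖y₁‖ ^ q - 1 / q * ‖y₂‖ ^ q - η (y₁ - y₂)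
        ≥ cS * (max ‖y₂‖ ‖y₁ - y₂‖) ^ (q - r) * ‖y₁ - y₂‖ ^ r)
    -- Xu–Roach inequality for S* = (1/q*)‖·‖^{q*}
    (cstar : ℝ) (hcstar : 0 < cstar)
    (hXRSstar : ∀ (p₁ p₂ : Y →L[ℝ] ℝ) (G : Y),
      (∀ p : Y →L[ℝ] ℝ, 1 / qs * ‖p₂‖ ^ qs + (p - p₂) G ≤ 1 / qs * ‖p‖ ^ qs) →
      1 / qs * ‖p₁‖ ^ qs - 1 / qs * ‖p₂‖ ^ qs - (p₁ - p₂) G ≥ cstar * ‖p₁ - p₂‖ ^ qs)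
    (c : ℝ) (hc : 0 < c) :
    ∃ C Ctld : ℝ, 0 < C ∧ 0 < Ctld ∧
      ∀ R : X → ℝ, ConvexOn ℝ Set.univ R →
      ∀ (fdag : X) (pbar : Y →L[ℝ] ℝ),
        (∀ h : X, R fdag + (pbar.comp T) (h - fdag) ≤ R h) →
      ∀ ωbar : X,
        (∀ p : Y →L[ℝ] ℝ,
          1 / qs * ‖pbar‖ ^ qs + (p - pbar) (T ωbar) ≤ 1 / qs * ‖p‖ ^ qs) →
      ∀ Φ : ℝ → ℝ, ContinuousOn Φ (Set.Ici 0) → MonotoneOn Φ (Set.Ici 0) →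
        Φ 0 = 0 → (∀ t : ℝ, 0 ≤ t → 0 ≤ Φ t) →
      ∀ β μ tbar : ℝ, 0 ≤ β → 1 < μ → 0 < tbar →
      ∀ ξ : ℝ → (X →L[ℝ] ℝ),
        (∀ t ∈ Set.Ioc (0 : ℝ) tbar, ∀ h : X,
          R (fdag - t • ωbar) + (ξ t) (h - (fdag - t • ωbar)) ≤ R h) →
        -- third order variational source condition
        (∀ f : X, ∀ t ∈ Set.Ioc (0 : ℝ) tbar,
          (ξ t - pbar.comp T) (fdag - t • ωbar - f)
            ≤ R f - R (fdag - t • ωbar) - (ξ t) (f - (fdag - t • ωbar))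
              + t ^ 2 * Φ (t ^ (-q) * ‖T f - T fdag + t • T ωbar‖ ^ q)
              + β * t ^ (2 * μ)) →
      ∀ δ α : ℝ, 0 < δ → 0 < α → δ ≤ c * α ^ (qs - 1) → α ^ (qs - 1) ≤ tbar →
      ∀ g : Y, ‖g - T fdag‖ ≤ δ →
      ∀ fhat : X,
        (∀ h : X, 1 / α * (1 / q * ‖T fhat - g‖ ^ q) + R fhat
          ≤ 1 / α * (1 / q * ‖T h - g‖ ^ q) + R h) →
      ∀ phat : Y →L[ℝ] ℝ,
        (∀ h : X, R fhat + (phat.comp T) (h - fhat) ≤ R h) →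
        (∀ y : Y, 1 / q * ‖T fhat - g‖ ^ q + ((-α) • phat) (y - (T fhat - g))
          ≤ 1 / q * ‖y‖ ^ q) →
      ∀ M : ℝ,
        (∀ τ : ℝ, 0 ≤ τ →
          -Ctld * (c + ‖T ωbar‖) ^ (q - r) * α ^ (-(qs - 1)) * τ + Φ (τ ^ (q / r))
            ≤ M) →
        1 / (2 * α) * (1 / qs * ‖(-α) • phat‖ ^ qs - 1 / qs * ‖(-α) • pbar‖ ^ qs
            + α ^ qs * ((pbar - phat) (T ωbar)))
          ≤ C * δ ^ q / α + α ^ (2 * (qs - 1)) * M + β * α ^ (2 * μ * (qs - 1)) := by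
  -- exponent arithmetic
  have hq0 : (0:ℝ) < q := by linarith
  have hqne : q ≠ 0 := ne_of_gt hq0
  have hq1 : (0:ℝ) < q - 1 := by linarith
  have hq1q : 1/q < 1 := by rw [div_lt_one hq0]; exact hq
  have hqspos : 0 < 1/qs := by linarith
  have hqs0 : 0 < qs := one_div_pos.mp hqspos
  have hqsne : qs ≠ 0 := ne_of_gt hqs0
  have hqq : q * qs = qs + q := by
    have h := hqs
    field_simp at h
    linarith only [h]
  have hkey : (qs - 1) * (q - 1) = 1 := by nlinarith [hqq]
  have hqs1 : 1 < qs := by nlinarith [hkey, hq1]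
  have hqsm1 : 0 < qs - 1 := by linarith
  have hqmul : (q - 1) * qs = q := by nlinarith [hqq]
  have hrq : q - r ≤ 0 := by linarith
  have hr0 : (0:ℝ) < r := by linarith
  have hrne : r ≠ 0 := ne_of_gt hr0
  -- constants
  set lam : ℝ := (qs * cstar / 2) ^ (1/qs) with hlam
  have hlam0 : 0 < lam := Real.rpow_pos_of_pos (by positivity) _
  have hlamne : lam ≠ 0 := ne_of_gt hlam0
  set C1 : ℝ := 1 / (q * lam ^ q) with hC1
  have hlamq0 : 0 < lam ^ q := Real.rpow_pos_of_pos hlam0 _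
  have hlamqne : lam ^ q ≠ 0 := ne_of_gt hlamq0
  have hC10 : 0 < C1 := by rw [hC1]; positivity
  set Cq : ℝ := (1 + 2*q) ^ (qs - 1) with hCq
  have hCq1 : 1 ≤ Cq := Real.one_le_rpow (by linarith) (le_of_lt hqsm1)
  have h2r0 : (0:ℝ) < (2:ℝ) ^ r := Real.rpow_pos_of_pos two_pos _
  have h2rne : ((2:ℝ) ^ r) ≠ 0 := ne_of_gt h2r0
  have hCqr0 : (0:ℝ) < (Cq + 1) ^ (q - r) := Real.rpow_pos_of_pos (by linarith) _
  set Ctld : ℝ := cS * (Cq + 1) ^ (q - r) / 2 ^ r with hCtld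
  have hCtld0 : 0 < Ctld := by rw [hCtld]; positivity
  refine ⟨C1 + cS, Ctld, by positivity, hCtld0, ?_⟩
  intro R hRconv fdag pbar hpbar ωbar hωbar Φ hΦc hΦm hΦ0 hΦnn β μ tbar hβ hμ htbar
    ξ hξsub hVSC δ α hδ hα hδle htle g hg fhat hmin phat hphatR hphatS M hM
  have hαne : α ≠ 0 := ne_of_gt hα
  have hδne : δ ≠ 0 := ne_of_gt hδ
  -- basic quantities
  set t : ℝ := α ^ (qs - 1) with htdef
  have ht0 : 0 < t := Real.rpow_pos_of_pos hα _
  have htne : t ≠ 0 := ne_of_gt ht0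
  have hαt : t ^ (q - 1) = α := by
    rw [htdef, ← Real.rpow_mul (le_of_lt hα), hkey, Real.rpow_one]
  set K : ℝ := c + ‖T ωbar‖ with hKdef
  have hK0 : 0 < K := by positivity
  have hTωK : ‖T ωbar‖ ≤ K := by
    rw [hKdef]; linarith only [hc]
  set Phat : (Y →L[ℝ] ℝ) := (-α) • phat with hPhatdef
  set Pbar : (Y →L[ℝ] ℝ) := (-α) • pbar with hPbardef
  set y₂ : Y := T fhat - g with hy2def
  set Gv : Y := (-t) • (T ωbar) with hGvdef
  set vv : Y := T fhat - T fdag + t • T ωbar with hvvdef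
  set dd : Y := T fdag - g with hdddef
  set u : X := fdag - t • ωbar with hudef
  have hddle : ‖dd‖ ≤ δ := by rw [hdddef, norm_sub_rev]; exact hg
  have hddle' : ‖T fdag - g‖ ≤ δ := by rw [norm_sub_rev]; exact hg
  have haa0 : (0:ℝ) < K * t := by positivity
  have hδa : δ ≤ K * t := by
    refine le_trans hδle ?_
    refine mul_le_mul_of_nonneg_right ?_ (le_of_lt ht0)
    rw [hKdef]; linarith only [norm_nonneg (T ωbar)]
  -- (F1) facts about Phat
  have hPhat_eval : Phat y₂ = ‖y₂‖ ^ q := subgrad_eval hq y₂ Phat hphatS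
  have hPhat_norm : ‖Phat‖ = ‖y₂‖ ^ (q-1) := subgrad_opNorm hq y₂ Phat hphatS
  -- (F2) Young
  have young : ∀ (a b : ℝ), 0 ≤ a → 0 ≤ b → a * b ≤ 1/q * a^q + 1/qs * b^qs := by
    intro a b ha hb
    have hconj : Real.HolderConjugate q qs := Real.holderConjugate_iff.mpr ⟨hq, by simpa [one_div] using hqs⟩
    calc a * b ≤ a^q/q + b^qs/qs := Real.young_inequality_of_nonneg ha hb hconj
      _ = 1/q * a^q + 1/qs * b^qs := by ring
  have hYoungCLM : ∀ (p : Y →L[ℝ] ℝ) (z : Y), p z ≤ 1/q * ‖z‖^q + 1/qs * ‖p‖^qs := by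
    intro p z
    calc p z ≤ ‖p z‖ := le_abs_self _
      _ ≤ ‖p‖ * ‖z‖ := p.le_opNorm z
      _ = ‖z‖ * ‖p‖ := by ring
      _ ≤ 1/q * ‖z‖^q + 1/qs * ‖p‖^qs := young _ _ (norm_nonneg _) (norm_nonneg _)
  -- (F4) pbar is a subgradient of S at T ωbar
  have hpbar_sub : ∀ h : Y, 1/q * ‖T ωbar‖ ^ q + pbar (h - T ωbar) ≤ 1/q * ‖h‖ ^ q := by
    by_cases hTω : T ωbar = 0
    · have h0 := hωbar 0
      rw [hTω] at h0
      simp only [map_zero, add_zero, norm_zero] at h0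
      rw [Real.zero_rpow hqsne] at h0
      have hpb0 : ‖pbar‖ ^ qs ≤ 0 := by
        have h1 : 1/qs * ‖pbar‖ ^ qs ≤ 1/qs * 0 := by linarith only [h0]
        exact (mul_le_mul_iff_right₀ hqspos).mp h1
      have hpb : pbar = 0 := by
        by_contra hne
        have h2 : 0 < ‖pbar‖ := norm_pos_iff.mpr hne
        have h3 := Real.rpow_pos_of_pos h2 qs
        linarith only [h3, hpb0]
      intro h
      rw [hTω, hpb]
      simp only [norm_zero, Real.zero_rpow hqne, ContinuousLinearMap.zero_apply,
        mul_zero, zero_add, add_zero]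
      positivity
    · obtain ⟨g₀, hg₀n, hg₀x⟩ := exists_dual_vector ℝ (T ωbar) (norm_ne_zero_iff.mpr hTω)
      have hTω0 : 0 < ‖T ωbar‖ := norm_pos_iff.mpr hTω
      set p₀ : Y →L[ℝ] ℝ := (‖T ωbar‖ ^ (q-1)) • g₀ with hp₀
      have hg₀x' : g₀ (T ωbar) = ‖T ωbar‖ := by exact_mod_cast hg₀x
      have hp₀n : ‖p₀‖ ≤ ‖T ωbar‖ ^ (q-1) := by
        rw [hp₀]
        have h9 := ContinuousLinearMap.opNorm_smul_le (‖T ωbar‖ ^ (q-1)) g₀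
        rw [Real.norm_eq_abs, abs_of_nonneg (Real.rpow_nonneg (norm_nonneg _) _), hg₀n,
          mul_one] at h9
        exact h9
      have hp₀x : p₀ (T ωbar) = ‖T ωbar‖ ^ q := by
        rw [hp₀, ContinuousLinearMap.smul_apply, hg₀x', smul_eq_mul,
          show q = (q-1) + 1 by ring, Real.rpow_add_one (ne_of_gt hTω0)]
        ring_nf
      have hexp : ‖p₀‖ ^ qs ≤ ‖T ωbar‖ ^ q := by
        calc ‖p₀‖ ^ qs ≤ (‖T ωbar‖ ^ (q-1)) ^ qs :=
              Real.rpow_le_rpow (norm_nonneg _) hp₀n (le_of_lt hqs0)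
          _ = ‖T ωbar‖ ^ q := by rw [← Real.rpow_mul (norm_nonneg _), hqmul]
      have h0 := hωbar p₀
      rw [ContinuousLinearMap.sub_apply, hp₀x] at h0
      have hexp2 : 1/qs * ‖p₀‖ ^ qs ≤ 1/qs * ‖T ωbar‖ ^ q :=
        mul_le_mul_of_nonneg_left hexp (by positivity)
      have e : 1/q * ‖T ωbar‖^q + 1/qs * ‖T ωbar‖^q = ‖T ωbar‖^q := by
        rw [← add_mul, hqs, one_mul]
      intro h
      have hY := hYoungCLM pbar h
      rw [map_sub]
      linarith only [h0, e, hY, hexp2]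
  have hpbar_norm : ‖pbar‖ = ‖T ωbar‖ ^ (q-1) := subgrad_opNorm hq (T ωbar) pbar hpbar_sub
  -- (F6) Pbar is a subgradient of S at Gv
  have hGn : ‖Gv‖ = t * ‖T ωbar‖ := by
    rw [hGvdef, norm_smul, Real.norm_eq_abs, abs_neg, abs_of_pos ht0]
  have htq0 : 0 < t ^ q := Real.rpow_pos_of_pos ht0 _
  have htqne : t ^ q ≠ 0 := ne_of_gt htq0
  have ht1 : t ^ q * t⁻¹ = t ^ (q-1) := by
    rw [show q - 1 = q + (-1) by ring, Real.rpow_add ht0, Real.rpow_neg_one]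
  have ht2 : t ^ (q-1) * t = t ^ q := by
    rw [← Real.rpow_add_one htne]
    congr 1; ring
  have hPbar_sub : ∀ h : Y, 1/q * ‖Gv‖ ^ q + Pbar (h - Gv) ≤ 1/q * ‖h‖ ^ q := by
    intro h
    have h0 := hpbar_sub ((-t⁻¹) • h)
    have e1 : ‖(-t⁻¹) • h‖ ^ q = (t^q)⁻¹ * ‖h‖^q := by
      rw [norm_smul, Real.norm_eq_abs, abs_neg, abs_of_pos (by positivity),
        Real.mul_rpow (by positivity) (norm_nonneg h), ← Real.inv_rpow (le_of_lt ht0)]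
    rw [e1] at h0
    have h1 := mul_le_mul_of_nonneg_left h0 (le_of_lt htq0)
    have e2 : t^q * (1/q * ((t^q)⁻¹ * ‖h‖^q)) = 1/q * ‖h‖^q := by
      field_simp
    have e3 : t^q * (1/q * ‖T ωbar‖^q) = 1/q * ‖Gv‖^q := by
      rw [hGn, Real.mul_rpow (le_of_lt ht0) (norm_nonneg _)]; ring
    have e4 : t^q * (pbar ((-t⁻¹) • h - T ωbar)) = Pbar (h - Gv) := by
      rw [map_sub, map_smul, smul_eq_mul]
      rw [hPbardef, hGvdef]
      simp only [ContinuousLinearMap.smul_apply, map_sub, map_smul, smul_eq_mul]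
      rw [← hαt]
      linear_combination (-(pbar h)) * ht1 + (pbar (T ωbar)) * ht2
    rw [mul_add, e2, e3, e4] at h1
    exact h1
  have hPbar_eval : Pbar Gv = ‖Gv‖ ^ q := subgrad_eval hq Gv Pbar hPbar_sub
  have hPbar_norm : ‖Pbar‖ = ‖Gv‖ ^ (q-1) := subgrad_opNorm hq Gv Pbar hPbar_sub
  -- (F8) Fenchel equalities
  have hSstarPhat : 1/qs * ‖Phat‖^qs = Phat y₂ - 1/q * ‖y₂‖^q := by
    rw [hPhat_norm, ← Real.rpow_mul (norm_nonneg _), hqmul, hPhat_eval]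
    linear_combination (‖y₂‖ ^ q) * hqs
  have hSstarPbar : 1/qs * ‖Pbar‖^qs = Pbar Gv - 1/q * ‖Gv‖^q := by
    rw [hPbar_norm, ← Real.rpow_mul (norm_nonneg _), hqmul, hPbar_eval]
    linear_combination (‖Gv‖ ^ q) * hqs
  -- (F10) Gv is a subgradient of S* at Pbar
  have hGsub : ∀ p : Y →L[ℝ] ℝ, 1/qs * ‖Pbar‖^qs + (p - Pbar) Gv ≤ 1/qs * ‖p‖^qs := by
    intro p
    have hY := hYoungCLM p Gv
    rw [ContinuousLinearMap.sub_apply, hSstarPbar]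
    linarith only [hY]
  have hB2 := hXRSstar Phat Pbar Gv hGsub
  -- (F12) exact identity
  set D3 : ℝ := 1/q * ‖y₂‖^q - 1/q * ‖Gv‖^q - Pbar (y₂ - Gv) with hD3def
  have hbid : 1/qs * ‖Phat‖^qs - 1/qs * ‖Pbar‖^qs - (Phat - Pbar) Gv
      = (Phat - Pbar) (y₂ - Gv) - D3 := by
    rw [hSstarPhat, hSstarPbar, hD3def]
    simp only [ContinuousLinearMap.sub_apply, map_sub]
    ring
  -- (F13) the goal bracket equals the same quantity
  have hαqs : α ^ qs = α * t := by
    rw [show qs = 1 + (qs - 1) by ring, Real.rpow_add hα, Real.rpow_one, htdef]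
  have hbracket : 1 / qs * ‖Phat‖ ^ qs - 1 / qs * ‖Pbar‖ ^ qs
      + α ^ qs * ((pbar - phat) (T ωbar))
      = (Phat - Pbar) (y₂ - Gv) - D3 := by
    rw [← hbid, hαqs]
    have e : (Phat - Pbar) Gv = -(α * t * ((pbar - phat) (T ωbar))) := by
      rw [hPhatdef, hPbardef, hGvdef]
      simp only [ContinuousLinearMap.sub_apply, ContinuousLinearMap.smul_apply,
        map_smul, smul_eq_mul]
      ring
    rw [e]; ring
  -- (F14) VSC bound
  set τ0 : ℝ := t ^ (-q) * ‖vv‖ ^ q with hτ0def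
  have hW1 : (pbar - phat) vv ≤ t^2 * Φ τ0 + β * t^(2*μ) := by
    have hv := hVSC fhat t ⟨ht0, htle⟩
    have hp := hphatR (fdag - t • ωbar)
    rw [← hvvdef, ← hτ0def] at hv
    simp only [ContinuousLinearMap.sub_apply, ContinuousLinearMap.comp_apply,
      map_sub, map_add, map_smul, smul_eq_mul] at hv hp
    rw [ContinuousLinearMap.sub_apply, hvvdef]
    simp only [map_sub, map_add, map_smul, smul_eq_mul]
    linarith only [hv, hp]
  -- (F15)
  have hsplit : y₂ - Gv = vv + dd := by
    rw [hy2def, hGvdef, hvvdef, hdddef]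
    simp only [neg_smul]
    abel
  have hPP : ∀ z : Y, (Phat - Pbar) z = α * ((pbar - phat) z) := by
    intro z
    rw [hPhatdef, hPbardef]
    simp only [ContinuousLinearMap.sub_apply, ContinuousLinearMap.smul_apply, smul_eq_mul]
    ring
  have hW : (Phat - Pbar) (y₂ - Gv)
      ≤ α * (t^2 * Φ τ0 + β * t^(2*μ)) + ‖Phat - Pbar‖ * δ := by
    rw [hsplit, map_add, hPP vv]
    have h1 : α * ((pbar - phat) vv) ≤ α * (t^2 * Φ τ0 + β * t^(2*μ)) :=
      mul_le_mul_of_nonneg_left hW1 (le_of_lt hα)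
    have h2 : (Phat - Pbar) dd ≤ ‖Phat - Pbar‖ * δ := by
      calc (Phat - Pbar) dd ≤ ‖(Phat - Pbar) dd‖ := le_abs_self _
        _ ≤ ‖Phat - Pbar‖ * ‖dd‖ := (Phat - Pbar).le_opNorm dd
        _ ≤ ‖Phat - Pbar‖ * δ :=
          mul_le_mul_of_nonneg_left hddle (norm_nonneg _)
    linarith only [h1, h2]
  -- (F16) Young with parameter
  have hYd : ‖Phat - Pbar‖ * δ ≤ cstar/2 * ‖Phat - Pbar‖^qs + C1 * δ^q := by
    set a := ‖Phat - Pbar‖ with hadef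
    have ha0 : 0 ≤ a := norm_nonneg _
    have hy := young (δ/lam) (lam * a) (by positivity) (by positivity)
    have e0 : (δ/lam) * (lam * a) = a * δ := by field_simp
    have e1 : (lam * a)^qs = (qs * cstar/2) * a^qs := by
      rw [Real.mul_rpow (le_of_lt hlam0) ha0, hlam,
        ← Real.rpow_mul (by positivity), one_div, inv_mul_cancel₀ hqsne, Real.rpow_one]
    have e2 : (δ/lam)^q = δ^q / lam^q := Real.div_rpow (le_of_lt hδ) (le_of_lt hlam0) q
    rw [e0, e1, e2] at hy
    have e3 : 1/qs * ((qs * cstar/2) * a^qs) = cstar/2 * a^qs := by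
      field_simp
    have e4 : 1/q * (δ^q/lam^q) = C1 * δ^q := by
      rw [hC1]; field_simp
    linarith only [hy, e3, e4]
  -- (F17) a priori bound
  have hapriori : ‖y₂‖ ≤ Cq * (K * t) := by
    have hmin' := hmin fdag
    have hpb := hpbar fhat
    simp only [ContinuousLinearMap.comp_apply, map_sub] at hpb
    have hTd : ‖T fdag - T fhat‖ ≤ δ + ‖y₂‖ := by
      have e : T fdag - T fhat = (T fdag - g) - y₂ := by rw [hy2def]; abel
      rw [e]
      calc ‖(T fdag - g) - y₂‖ ≤ ‖T fdag - g‖ + ‖y₂‖ := norm_sub_le _ _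
        _ ≤ δ + ‖y₂‖ := by linarith only [hddle']
    have hRd : R fdag - R fhat ≤ K^(q-1) * (δ + ‖y₂‖) := by
      have h1 : R fdag - R fhat ≤ pbar (T fdag) - pbar (T fhat) := by
        linarith only [hpb]
      have h2 : pbar (T fdag) - pbar (T fhat) ≤ ‖pbar‖ * ‖T fdag - T fhat‖ := by
        calc pbar (T fdag) - pbar (T fhat) = pbar (T fdag - T fhat) := by rw [map_sub]
          _ ≤ ‖pbar (T fdag - T fhat)‖ := le_abs_self _
          _ ≤ ‖pbar‖ * ‖T fdag - T fhat‖ := pbar.le_opNorm _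
      have h3 : ‖pbar‖ ≤ K^(q-1) := by
        rw [hpbar_norm]
        exact Real.rpow_le_rpow (norm_nonneg _) hTωK (by linarith)
      have h4 : ‖pbar‖ * ‖T fdag - T fhat‖ ≤ K^(q-1) * (δ + ‖y₂‖) :=
        mul_le_mul h3 hTd (norm_nonneg _) (by positivity)
      linarith only [h1, h2, h4]
    have hB1 : 1/q * ‖T fdag - g‖^q ≤ 1/q * δ^q := by
      have h5 := Real.rpow_le_rpow (norm_nonneg _) hddle' (le_of_lt hq0)
      exact mul_le_mul_of_nonneg_left h5 (by positivity)
    have hmain : 1/q * ‖y₂‖^q ≤ 1/q * δ^q + (K*t)^(q-1) * (δ + ‖y₂‖) := by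
      have h5 : 1/α * (1/q * ‖y₂‖^q) - 1/α * (1/q * ‖T fdag - g‖^q)
          ≤ R fdag - R fhat := by linarith only [hmin']
      have h6 : 1/q * ‖y₂‖^q - 1/q * ‖T fdag - g‖^q ≤ α * (R fdag - R fhat) := by
        have h7 := mul_le_mul_of_nonneg_left h5 (le_of_lt hα)
        calc 1/q * ‖y₂‖^q - 1/q * ‖T fdag - g‖^q
            = α * (1/α * (1/q * ‖y₂‖^q) - 1/α * (1/q * ‖T fdag - g‖^q)) := by
              field_simp
          _ ≤ α * (R fdag - R fhat) := h7
      have h7 : α * (R fdag - R fhat) ≤ α * (K^(q-1) * (δ + ‖y₂‖)) :=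
        mul_le_mul_of_nonneg_left hRd (le_of_lt hα)
      have h8 : α * (K^(q-1) * (δ + ‖y₂‖)) = (K*t)^(q-1) * (δ + ‖y₂‖) := by
        rw [Real.mul_rpow (le_of_lt hK0) (le_of_lt ht0), hαt]
        ring
      linarith only [h6, h7, h8, hB1]
    by_cases hcase : ‖y₂‖ ≤ K * t
    · calc ‖y₂‖ ≤ K * t := hcase
        _ ≤ Cq * (K * t) := le_mul_of_one_le_left (le_of_lt haa0) hCq1
    · push_neg at hcase
      have hyy0 : 0 < ‖y₂‖ := lt_trans haa0 hcase
      have hmain' : ‖y₂‖^q ≤ δ^q + q * ((K*t)^(q-1) * (δ + ‖y₂‖)) := by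
        have h := mul_le_mul_of_nonneg_left hmain (le_of_lt hq0)
        have e1 : q * (1/q * ‖y₂‖^q) = ‖y₂‖^q := by field_simp
        have e2 : q * (1/q * δ^q + (K*t)^(q-1)*(δ + ‖y₂‖))
            = δ^q + q * ((K*t)^(q-1) * (δ + ‖y₂‖)) := by field_simp
        rw [e1, e2] at h
        exact h
      have hδq : δ^q ≤ (K*t)^q := Real.rpow_le_rpow (le_of_lt hδ) hδa (le_of_lt hq0)
      have haq : (K*t)^q = (K*t)^(q-1) * (K*t) := by
        rw [← Real.rpow_add_one (ne_of_gt haa0)]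
        congr 1; ring
      have hyq : ‖y₂‖^q = ‖y₂‖^(q-1) * ‖y₂‖ := by
        rw [← Real.rpow_add_one (ne_of_gt hyy0)]
        congr 1; ring
      have haa1 : 0 < (K*t)^(q-1) := Real.rpow_pos_of_pos haa0 _
      have t1 : (K*t)^(q-1) * (K*t) ≤ (K*t)^(q-1) * ‖y₂‖ :=
        mul_le_mul_of_nonneg_left (le_of_lt hcase) (le_of_lt haa1)
      have t2 : q * ((K*t)^(q-1) * (δ + ‖y₂‖)) ≤ q * ((K*t)^(q-1) * (‖y₂‖ + ‖y₂‖)) := by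
        have hδy : δ + ‖y₂‖ ≤ ‖y₂‖ + ‖y₂‖ := by
          have := le_trans hδa (le_of_lt hcase)
          linarith only [this]
        have h9 := mul_le_mul_of_nonneg_left hδy (le_of_lt haa1)
        exact mul_le_mul_of_nonneg_left h9 (le_of_lt hq0)
      have hstep : ‖y₂‖^(q-1) * ‖y₂‖ ≤ (1 + 2*q) * (K*t)^(q-1) * ‖y₂‖ := by
        linarith only [hmain', hδq, haq, hyq, t1, t2]
      have hcancel : ‖y₂‖^(q-1) ≤ (1 + 2*q) * (K*t)^(q-1) :=
        le_of_mul_le_mul_right (by linarith only [hstep]) hyy0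
      have hfinal := Real.rpow_le_rpow (Real.rpow_nonneg (norm_nonneg _) _)
        hcancel (le_of_lt hqsm1)
      rw [← Real.rpow_mul (norm_nonneg _), show (q-1)*(qs-1) = 1 by linarith [hkey],
        Real.rpow_one] at hfinal
      rw [Real.mul_rpow (by linarith : (0:ℝ) ≤ 1 + 2*q)
        (Real.rpow_nonneg (le_of_lt haa0) _), ← Real.rpow_mul (le_of_lt haa0),
        show (q-1)*(qs-1) = 1 by linarith [hkey], Real.rpow_one] at hfinal
      rw [hCq]
      exact hfinal
  -- (F18) bounds on Gv and w
  set w : ℝ := ‖y₂ - Gv‖ with hwdef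
  have hGle : ‖Gv‖ ≤ K * t := by
    rw [hGn]
    calc t * ‖T ωbar‖ ≤ t * K := mul_le_mul_of_nonneg_left hTωK (le_of_lt ht0)
      _ = K * t := by ring
  have hwle : w ≤ (Cq + 1) * (K * t) := by
    rw [hwdef]
    calc ‖y₂ - Gv‖ ≤ ‖y₂‖ + ‖Gv‖ := norm_sub_le _ _
      _ ≤ Cq * (K*t) + K*t := by linarith only [hapriori, hGle]
      _ = (Cq + 1) * (K*t) := by ring
  -- (F19) Xu–Roach lower bound for D3
  have hD3nn : 0 ≤ D3 := by
    have h0 := hPbar_sub y₂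
    rw [hD3def]; linarith only [h0]
  have hD3 : cS * ((Cq+1)*(K*t))^(q-r) * w^r ≤ D3 := by
    by_cases hw0 : w = 0
    · rw [hw0, Real.zero_rpow hrne, mul_zero]
      exact hD3nn
    · have hw0' : 0 < w := lt_of_le_of_ne (norm_nonneg _) (Ne.symm hw0)
      have hxr := hXRS y₂ Gv Pbar hPbar_sub
      rw [← hwdef] at hxr
      have hmle : max ‖Gv‖ w ≤ (Cq+1)*(K*t) := by
        refine max_le (le_trans hGle ?_) hwle
        exact le_mul_of_one_le_left (le_of_lt haa0) (by linarith only [hCq1])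
      have hm0 : 0 < max ‖Gv‖ w := lt_of_lt_of_le hw0' (le_max_right _ _)
      have hmono : ((Cq+1)*(K*t))^(q-r) ≤ (max ‖Gv‖ w)^(q-r) :=
        Real.rpow_le_rpow_of_nonpos hm0 hmle hrq
      have hwr : 0 ≤ w^r := Real.rpow_nonneg (norm_nonneg _) _
      have h3 := mul_le_mul_of_nonneg_right hmono hwr
      have h4 := mul_le_mul_of_nonneg_left h3 (le_of_lt hcS)
      rw [hD3def]
      have h5 : 1/q * ‖y₂‖^q - 1/q * ‖Gv‖^q - Pbar (y₂ - Gv)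
          ≥ cS * (max ‖Gv‖ w)^(q-r) * w^r := hxr
      linarith only [h4, h5]
  -- (F20) using the hypothesis on M
  set τ : ℝ := (‖vv‖/t)^r with hτdef
  have hτnn : 0 ≤ τ := Real.rpow_nonneg (div_nonneg (norm_nonneg _) (le_of_lt ht0)) _
  have hτexp : τ^(q/r) = τ0 := by
    rw [hτdef, ← Real.rpow_mul (div_nonneg (norm_nonneg _) (le_of_lt ht0)),
      show r * (q/r) = q by field_simp, Real.div_rpow (norm_nonneg _) (le_of_lt ht0),
      hτ0def, Real.rpow_neg (le_of_lt ht0), div_eq_mul_inv]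
    ring
  have hαinvqs : α ^ (-(qs-1)) = t⁻¹ := by
    rw [Real.rpow_neg (le_of_lt hα), htdef]
  have hΦle : Φ τ0 ≤ M + Ctld * K^(q-r) * t⁻¹ * τ := by
    have hMτ := hM τ hτnn
    rw [hτexp, hαinvqs] at hMτ
    linarith only [hMτ]
  -- (F21) absorption
  have hxw : ‖vv‖ ≤ w + δ := by
    have hvv2 : vv = (y₂ - Gv) - dd := by
      rw [hy2def, hGvdef, hvvdef, hdddef]
      simp only [neg_smul]
      abel
    rw [hvv2]
    calc ‖(y₂ - Gv) - dd‖ ≤ ‖y₂ - Gv‖ + ‖dd‖ := norm_sub_le _ _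
      _ ≤ w + δ := by rw [hwdef]; linarith only [hddle]
  have hxr2 : ‖vv‖^r ≤ 2^r * w^r + 2^r * δ^r := by
    have hwr : 0 ≤ w^r := Real.rpow_nonneg (norm_nonneg _) _
    have hdr : 0 ≤ δ^r := Real.rpow_nonneg (le_of_lt hδ) _
    have h2r : (0:ℝ) ≤ 2^r := le_of_lt h2r0
    rcases le_total δ w with hcase | hcase
    · have h1 : ‖vv‖ ≤ 2 * w := by linarith only [hxw, hcase]
      have h := Real.rpow_le_rpow (norm_nonneg _) h1 (le_of_lt hr0)
      rw [Real.mul_rpow (by norm_num) (norm_nonneg _)] at h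
      have h2 : (0:ℝ) ≤ 2^r * δ^r := mul_nonneg h2r hdr
      linarith only [h, h2]
    · have h1 : ‖vv‖ ≤ 2 * δ := by linarith only [hxw, hcase]
      have h := Real.rpow_le_rpow (norm_nonneg _) h1 (le_of_lt hr0)
      rw [Real.mul_rpow (by norm_num) (le_of_lt hδ)] at h
      have h2 : (0:ℝ) ≤ 2^r * w^r := mul_nonneg h2r hwr
      linarith only [h, h2]
  have hτval : τ = ‖vv‖^r * (t^r)⁻¹ := by
    rw [hτdef, Real.div_rpow (norm_nonneg _) (le_of_lt ht0), div_eq_mul_inv]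
  have hKqr0 : (0:ℝ) < K^(q-r) := Real.rpow_pos_of_pos hK0 _
  have ht1r0 : (0:ℝ) < t^(1-r) := Real.rpow_pos_of_pos ht0 _
  have hLHSeq : t^2 * (Ctld * K^(q-r) * t⁻¹ * τ) = Ctld * K^(q-r) * t^(1-r) * ‖vv‖^r := by
    rw [hτval]
    have e1 : t^(1-r) = t^2 * t⁻¹ * (t^r)⁻¹ := by
      rw [show (1:ℝ) - r = 2 + (-1) + (-r) by ring, Real.rpow_add ht0, Real.rpow_add ht0,
        Real.rpow_neg_one, Real.rpow_neg (le_of_lt ht0),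
        show ((2:ℝ)) = ((2:ℕ):ℝ) by norm_num, Real.rpow_natCast]
    rw [e1]; ring
  have hC2 : Ctld * 2^r = cS * (Cq+1)^(q-r) := by
    rw [hCtld]; field_simp
  have hδqt : (0:ℝ) ≤ δ^q * t^(1-q) := by positivity
  have habs : t^2 * (Ctld * K^(q-r) * t⁻¹ * τ) ≤ D3 * t^(1-q) + cS * (δ^q * t^(1-q)) := by
    rw [hLHSeq]
    have step1 : Ctld * K^(q-r) * t^(1-r) * ‖vv‖^r
        ≤ Ctld * K^(q-r) * t^(1-r) * (2^r * w^r + 2^r * δ^r) :=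
      mul_le_mul_of_nonneg_left hxr2 (by positivity)
    have step2 : Ctld * K^(q-r) * t^(1-r) * (2^r * w^r + 2^r * δ^r)
        = cS * (Cq+1)^(q-r) * K^(q-r) * t^(1-r) * w^r
          + cS * (Cq+1)^(q-r) * K^(q-r) * t^(1-r) * δ^r := by
      linear_combination (K^(q-r) * t^(1-r) * (w^r + δ^r)) * hC2
    have hsplit1 : (Cq+1)^(q-r) * K^(q-r) * t^(1-r) = ((Cq+1)*(K*t))^(q-r) * t^(1-q) := by
      rw [Real.mul_rpow (by linarith : (0:ℝ) ≤ Cq + 1) (le_of_lt haa0),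
        Real.mul_rpow (le_of_lt hK0) (le_of_lt ht0)]
      have e5 : t^(q-r) * t^(1-q) = t^(1-r) := by
        rw [← Real.rpow_add ht0]
        congr 1; ring
      linear_combination ((Cq+1)^(q-r) * K^(q-r)) * e5.symm
    have term1 : cS * (Cq+1)^(q-r) * K^(q-r) * t^(1-r) * w^r ≤ D3 * t^(1-q) := by
      have e6 : cS * (Cq+1)^(q-r) * K^(q-r) * t^(1-r) * w^r
          = (cS * ((Cq+1)*(K*t))^(q-r) * w^r) * t^(1-q) := by
        linear_combination (cS * w^r) * hsplit1
      rw [e6]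
      exact mul_le_mul_of_nonneg_right hD3 (Real.rpow_nonneg (le_of_lt ht0) _)
    have term2 : cS * (Cq+1)^(q-r) * K^(q-r) * t^(1-r) * δ^r ≤ cS * (δ^q * t^(1-q)) := by
      have hCqle1 : (Cq+1)^(q-r) ≤ 1 :=
        Real.rpow_le_one_of_one_le_of_nonpos (by linarith only [hCq1]) hrq
      have hdec1 : δ^r = δ^(r-q) * δ^q := by
        rw [← Real.rpow_add hδ]
        congr 1; ring
      have hdec2 : t^(1-r) = t^(1-q) * t^(q-r) := by
        rw [← Real.rpow_add ht0]
        congr 1; ring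
      have hfac : K^(q-r) * t^(q-r) * δ^(r-q) ≤ 1 := by
        have e1 : K^(q-r) * t^(q-r) = (K*t)^(q-r) :=
          (Real.mul_rpow (le_of_lt hK0) (le_of_lt ht0)).symm
        have e2 : δ^(r-q) ≤ (K*t)^(r-q) :=
          Real.rpow_le_rpow (le_of_lt hδ) hδa (by linarith)
        have e3 : (K*t)^(q-r) * (K*t)^(r-q) = 1 := by
          rw [← Real.rpow_add haa0, show (q-r) + (r-q) = 0 by ring, Real.rpow_zero]
        have e4 : (0:ℝ) ≤ (K*t)^(q-r) := Real.rpow_nonneg (le_of_lt haa0) _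
        calc K^(q-r) * t^(q-r) * δ^(r-q) = (K*t)^(q-r) * δ^(r-q) := by rw [e1]
          _ ≤ (K*t)^(q-r) * (K*t)^(r-q) := mul_le_mul_of_nonneg_left e2 e4
          _ = 1 := e3
      have hfac0 : (0:ℝ) ≤ K^(q-r) * t^(q-r) * δ^(r-q) := by positivity
      have hab : (Cq+1)^(q-r) * (K^(q-r) * t^(q-r) * δ^(r-q)) ≤ 1 := by
        have h2 : 0 ≤ (Cq+1)^(q-r) * (1 - K^(q-r) * t^(q-r) * δ^(r-q)) :=
          mul_nonneg (le_of_lt hCqr0) (by linarith only [hfac])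
        linarith only [h2, hCqle1]
      have h3 := mul_le_mul_of_nonneg_left hab (le_of_lt hcS)
      have h4 := mul_le_mul_of_nonneg_right h3 hδqt
      have e7 : cS * (Cq+1)^(q-r) * K^(q-r) * t^(1-r) * δ^r
          = cS * ((Cq+1)^(q-r) * (K^(q-r) * t^(q-r) * δ^(r-q))) * (δ^q * t^(1-q)) := by
        rw [hdec1, hdec2]; ring
      rw [e7]
      calc cS * ((Cq+1)^(q-r) * (K^(q-r) * t^(q-r) * δ^(r-q))) * (δ^q * t^(1-q))
          ≤ cS * 1 * (δ^q * t^(1-q)) := h4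
        _ = cS * (δ^q * t^(1-q)) := by ring
    linarith only [step1, step2, term1, term2]
  -- (F22) final assembly
  rw [hbracket]
  have hB2' : cstar * ‖Phat - Pbar‖^qs ≤ (Phat - Pbar) (y₂ - Gv) - D3 := by
    rw [← hbid]; exact hB2
  have hBB : (Phat - Pbar) (y₂ - Gv) - D3
      ≤ 2 * (α * (t^2 * Φ τ0 + β * t^(2*μ)) + C1 * δ^q - D3) := by
    linarith only [hW, hYd, hB2']
  have hfrac0 : (0:ℝ) ≤ 1/(2*α) := by positivity
  have hmulBB := mul_le_mul_of_nonneg_left hBB hfrac0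
  have hsimp : 1/(2*α) * (2 * (α * (t^2 * Φ τ0 + β * t^(2*μ)) + C1 * δ^q - D3))
      = t^2 * Φ τ0 + β * t^(2*μ) + C1 * δ^q / α - D3 / α := by
    field_simp
  rw [hsimp] at hmulBB
  have hαinv : α⁻¹ = t^(1-q) := by
    rw [← hαt, ← Real.rpow_neg (le_of_lt ht0)]
    congr 1; ring
  have habs' : t^2 * (Ctld * K^(q-r) * t⁻¹ * τ) ≤ D3/α + cS * (δ^q/α) := by
    rw [div_eq_mul_inv, div_eq_mul_inv, hαinv]
    exact habs
  have hΦstep : t^2 * Φ τ0 ≤ t^2 * M + t^2 * (Ctld * K^(q-r) * t⁻¹ * τ) := by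
    have h0 := mul_le_mul_of_nonneg_left hΦle (by positivity : (0:ℝ) ≤ t^2)
    linarith only [h0]
  have hconv1 : α ^ (2*(qs-1)) = t^2 := by
    rw [show 2*(qs-1) = (qs-1)*2 by ring, Real.rpow_mul (le_of_lt hα), ← htdef,
      show ((2:ℝ)) = ((2:ℕ):ℝ) by norm_num, Real.rpow_natCast]
  have hconv2 : α ^ (2*μ*(qs-1)) = t^(2*μ) := by
    rw [show 2*μ*(qs-1) = (qs-1)*(2*μ) by ring, Real.rpow_mul (le_of_lt hα), ← htdef]
  rw [hconv1, hconv2]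
  have hfin : (C1 + cS) * δ^q / α = C1 * δ^q/α + cS * (δ^q/α) := by ring
  linarith only [hmulBB, hΦstep, habs', hfin]
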